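/- Assume n ≥ 3. Then for all pairwise distinct j, k, ℓ ∈ {1,…,n}, every smooth F : ℂⁿ → ℂ, and every p ∈ S: p_j·(X_{kℓ}F)(p) + p_k·(X_{ℓj}F)(p) + p_ℓ·(X_{jk}F)(p) = 0; that is, z_j·X_{kℓ} + z_k·X_{ℓj} + z_ℓ·X_{jk} = 0 as vector fields along S. -/

import Mathlib

open Complex

/-- Wirtinger derivative ∂F/∂z_j at p. -/
noncomputable def wirtZ {n : ℕ} (F : (Fin n → ℂ) → ℂ) (p : Fin n → ℂ) (j : Fin n) : ℂ :=
  (1/2) * (fderiv ℝ F p (Pi.single j 1) - I * fderiv ℝ F p (Pi.single j I))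

/-- Wirtinger derivative ∂F/∂z̄_j at p. -/
noncomputable def wirtZbar {n : ℕ} (F : (Fin n → ℂ) → ℂ) (p : Fin n → ℂ) (j : Fin n) : ℂ :=
  (1/2) * (fderiv ℝ F p (Pi.single j 1) + I * fderiv ℝ F p (Pi.single j I))

/-- The projective dual coordinates w_j(z) = (∂ρ/∂z_j)/(Σ_k z_k ∂ρ/∂z_k). -/
noncomputable def wC {n : ℕ} (ρ : (Fin n → ℂ) → ℝ) (z : Fin n → ℂ) (j : Fin n) : ℂ :=
  wirtZ (fun q => (ρ q : ℂ)) z j / ∑ k, z k * wirtZ (fun q => (ρ q : ℂ)) z k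

/-- The operator X_{jk} F = Σ_m b^{jk}_m ∂F/∂z̄_m. -/
noncomputable def XopN {n : ℕ} (b : Fin n → Fin n → (Fin n → ℂ) → Fin n → ℂ) (j k : Fin n)
    (F : (Fin n → ℂ) → ℂ) (p : Fin n → ℂ) : ℂ :=
  ∑ m, b j k p m * wirtZbar F p m

section XfrHelpers

lemma Xfr_one_le : ((⊤:ℕ∞) : WithTop ℕ∞) ≠ 0 := by
  simp

lemma Xfr_two_le : (2 : WithTop ℕ∞) ≤ ((⊤:ℕ∞) : WithTop ℕ∞) := by
  exact_mod_cast ENat.natCast_le_of_coe_top_le_withTop le_rfl 2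

lemma Xfr_contDiff_fderiv_apply {E F : Type*} [NormedAddCommGroup E] [NormedSpace ℝ E]
    [NormedAddCommGroup F] [NormedSpace ℝ F] {f : E → F} (hf : ContDiff ℝ (⊤:ℕ∞) f) (v : E) :
    ContDiff ℝ (⊤:ℕ∞) (fun z => fderiv ℝ f z v) :=
  (hf.fderiv_right (m := ((⊤:ℕ∞) : WithTop ℕ∞)) le_rfl).clm_apply contDiff_const

variable {n : ℕ} {p : Fin n → ℂ}

lemma Xfr_wb_mul {f g : (Fin n → ℂ) → ℂ} (hf : DifferentiableAt ℝ f p)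
    (hg : DifferentiableAt ℝ g p) (i : Fin n) :
    wirtZbar (fun z => f z * g z) p i = wirtZbar f p i * g p + f p * wirtZbar g p i := by
  simp only [wirtZbar, fderiv_fun_mul hf hg, ContinuousLinearMap.add_apply,
    ContinuousLinearMap.smul_apply, smul_eq_mul]
  ring

lemma Xfr_wb_inv {f : (Fin n → ℂ) → ℂ} (hf : DifferentiableAt ℝ f p) (h0 : f p ≠ 0) (i : Fin n) :
    wirtZbar (fun z => (f z)⁻¹) p i = -(((f p)^2)⁻¹) * wirtZbar f p i := by
  have hcomp : fderiv ℝ (fun z => (f z)⁻¹) p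
      = (fderiv ℝ (Inv.inv : ℂ → ℂ) (f p)).comp (fderiv ℝ f p) :=
    fderiv_comp p (differentiableAt_inv h0) hf
  simp only [wirtZbar, hcomp, fderiv_inv' h0, ContinuousLinearMap.comp_apply,
    ContinuousLinearMap.neg_apply, ContinuousLinearMap.mulLeftRight_apply]
  field_simp
  ring

lemma Xfr_wb_sum {ι : Type*} (u : Finset ι) {f : ι → (Fin n → ℂ) → ℂ}
    (hf : ∀ s ∈ u, DifferentiableAt ℝ (f s) p) (i : Fin n) :
    wirtZbar (fun z => ∑ s ∈ u, f s z) p i = ∑ s ∈ u, wirtZbar (f s) p i := by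
  simp only [wirtZbar, fderiv_fun_sum hf, ContinuousLinearMap.sum_apply]
  rw [Finset.mul_sum, ← Finset.sum_add_distrib, Finset.mul_sum]

lemma Xfr_fderiv_coord (k : Fin n) :
    fderiv ℝ (fun z : Fin n → ℂ => z k) p = ContinuousLinearMap.proj k := by
  have h : (fun z : Fin n → ℂ => z k)
      = ⇑(ContinuousLinearMap.proj (R := ℝ) (φ := fun _ : Fin n => ℂ) k) := rfl
  rw [h, ContinuousLinearMap.fderiv]

lemma Xfr_wb_coord (k i : Fin n) : wirtZbar (fun z : Fin n → ℂ => z k) p i = 0 := by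
  simp only [wirtZbar, Xfr_fderiv_coord, ContinuousLinearMap.proj_apply]
  by_cases h : k = i <;>
    simp [Pi.single_apply, h, Complex.I_mul_I]

lemma Xfr_wb_comb {f g : (Fin n → ℂ) → ℂ} (hf : DifferentiableAt ℝ f p)
    (hg : DifferentiableAt ℝ g p) (c : ℂ) (i : Fin n) :
    wirtZbar (fun z => c * (f z - Complex.I * g z)) p i
      = c * (wirtZbar f p i - Complex.I * wirtZbar g p i) := by
  have hd : DifferentiableAt ℝ (fun z => f z - Complex.I * g z) p :=
    hf.sub ((differentiableAt_const _).mul hg)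
  simp only [wirtZbar, fderiv_const_mul hd c,
    fderiv_fun_sub hf ((differentiableAt_const (Complex.I)).fun_mul hg),
    fderiv_const_mul hg Complex.I, ContinuousLinearMap.smul_apply,
    ContinuousLinearMap.sub_apply, smul_eq_mul]
  ring

end XfrHelpers

section XfrReal

variable {n : ℕ} {ρ : (Fin n → ℂ) → ℝ}

lemma Xfr_contDiff_ofReal (hρ : ContDiff ℝ (⊤:ℕ∞) ρ) :
    ContDiff ℝ (⊤:ℕ∞) (fun q => ((ρ q : ℝ) : ℂ)) :=
  Complex.ofRealCLM.contDiff.comp hρ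

lemma Xfr_fderiv_ofReal (hρ : ContDiff ℝ (⊤:ℕ∞) ρ) (z v : Fin n → ℂ) :
    fderiv ℝ (fun q => ((ρ q : ℝ) : ℂ)) z v = ((fderiv ℝ ρ z v : ℝ) : ℂ) := by
  have h : (fun q => ((ρ q : ℝ) : ℂ)) = (⇑Complex.ofRealCLM) ∘ ρ := rfl
  rw [h, fderiv_comp z Complex.ofRealCLM.differentiableAt
    ((hρ.differentiable Xfr_one_le) z)]
  simp

lemma Xfr_snd_bridge (hρ : ContDiff ℝ (⊤:ℕ∞) ρ) (p u v : Fin n → ℂ) :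
    fderiv ℝ (fun z => fderiv ℝ (fun q => ((ρ q : ℝ) : ℂ)) z v) p u
      = fderiv ℝ (fderiv ℝ (fun q => ((ρ q : ℝ) : ℂ))) p u v := by
  have hfC : ContDiff ℝ (⊤:ℕ∞) (fun q => ((ρ q : ℝ) : ℂ)) := Xfr_contDiff_ofReal hρ
  rw [fderiv_clm_apply
    (((hfC.fderiv_right (m := ((⊤:ℕ∞) : WithTop ℕ∞)) le_rfl).differentiable Xfr_one_le) p)
    (differentiableAt_const v)]
  simp

lemma Xfr_snd_symm (hρ : ContDiff ℝ (⊤:ℕ∞) ρ) (p u v : Fin n → ℂ) :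
    fderiv ℝ (fderiv ℝ (fun q => ((ρ q : ℝ) : ℂ))) p u v
      = fderiv ℝ (fderiv ℝ (fun q => ((ρ q : ℝ) : ℂ))) p v u :=
  ((Xfr_contDiff_ofReal hρ).contDiffAt).isSymmSndFDerivAt (by simpa [minSmoothness_of_isRCLikeNormedField] using Xfr_two_le) u v

lemma Xfr_snd_real (hρ : ContDiff ℝ (⊤:ℕ∞) ρ) (p u v : Fin n → ℂ) :
    (starRingEnd ℂ) (fderiv ℝ (fderiv ℝ (fun q => ((ρ q : ℝ) : ℂ))) p u v)
      = fderiv ℝ (fderiv ℝ (fun q => ((ρ q : ℝ) : ℂ))) p u v := by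
  rw [← Xfr_snd_bridge hρ p u v]
  have h1 : (fun z => fderiv ℝ (fun q => ((ρ q : ℝ) : ℂ)) z v)
      = (⇑Complex.ofRealCLM) ∘ (fun z => fderiv ℝ ρ z v) := by
    funext z; exact Xfr_fderiv_ofReal hρ z v
  rw [h1, fderiv_comp p Complex.ofRealCLM.differentiableAt
    (((Xfr_contDiff_fderiv_apply hρ v).differentiable Xfr_one_le) p)]
  simp [Complex.conj_ofReal]

lemma Xfr_wbar_conj (hρ : ContDiff ℝ (⊤:ℕ∞) ρ) (p : Fin n → ℂ) (m : Fin n) :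
    wirtZbar (fun q => (ρ q : ℂ)) p m = (starRingEnd ℂ) (wirtZ (fun q => (ρ q : ℂ)) p m) := by
  simp only [wirtZ, wirtZbar, Xfr_fderiv_ofReal hρ p (Pi.single m 1),
    Xfr_fderiv_ofReal hρ p (Pi.single m I)]
  simp only [map_mul, map_sub, map_div₀, map_one, map_ofNat, Complex.conj_I,
    Complex.conj_ofReal]
  ring

lemma Xfr_H_expand (hρ : ContDiff ℝ (⊤:ℕ∞) ρ) (p : Fin n → ℂ) (i m : Fin n) :
    wirtZbar (fun z => wirtZ (fun q => (ρ q : ℂ)) z m) p i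
      = (1/2 : ℂ) * ((1/2 : ℂ) * (fderiv ℝ (fderiv ℝ (fun q => ((ρ q : ℝ) : ℂ))) p (Pi.single i 1) (Pi.single m 1)
            + I * fderiv ℝ (fderiv ℝ (fun q => ((ρ q : ℝ) : ℂ))) p (Pi.single i I) (Pi.single m 1))
          - I * ((1/2 : ℂ) * (fderiv ℝ (fderiv ℝ (fun q => ((ρ q : ℝ) : ℂ))) p (Pi.single i 1) (Pi.single m I)
            + I * fderiv ℝ (fderiv ℝ (fun q => ((ρ q : ℝ) : ℂ))) p (Pi.single i I) (Pi.single m I)))) := by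
  have hfC : ContDiff ℝ (⊤:ℕ∞) (fun q => ((ρ q : ℝ) : ℂ)) := Xfr_contDiff_ofReal hρ
  have hE : ∀ v : Fin n → ℂ, DifferentiableAt ℝ (fun z => fderiv ℝ (fun q => ((ρ q : ℝ) : ℂ)) z v) p :=
    fun v => ((Xfr_contDiff_fderiv_apply hfC v).differentiable Xfr_one_le) p
  have h1 : (fun z => wirtZ (fun q => (ρ q : ℂ)) z m)
      = fun z => (1/2 : ℂ) * ((fun z' => fderiv ℝ (fun q => ((ρ q : ℝ) : ℂ)) z' (Pi.single m 1)) z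
          - Complex.I * (fun z' => fderiv ℝ (fun q => ((ρ q : ℝ) : ℂ)) z' (Pi.single m I)) z) := rfl
  rw [h1, Xfr_wb_comb (hE (Pi.single m 1)) (hE (Pi.single m I)) ((1:ℂ)/2) i]
  simp only [wirtZbar]
  rw [Xfr_snd_bridge hρ, Xfr_snd_bridge hρ, Xfr_snd_bridge hρ, Xfr_snd_bridge hρ]

lemma Xfr_herm (hρ : ContDiff ℝ (⊤:ℕ∞) ρ) (p : Fin n → ℂ) (i m : Fin n) :
    (starRingEnd ℂ) (wirtZbar (fun z => wirtZ (fun q => (ρ q : ℂ)) z m) p i)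
      = wirtZbar (fun z => wirtZ (fun q => (ρ q : ℂ)) z i) p m := by
  rw [Xfr_H_expand hρ p i m, Xfr_H_expand hρ p m i]
  simp only [map_mul, map_sub, map_add, map_div₀, map_one, map_ofNat, Complex.conj_I,
    Xfr_snd_real hρ]
  rw [Xfr_snd_symm hρ p (Pi.single i 1) (Pi.single m 1),
    Xfr_snd_symm hρ p (Pi.single i I) (Pi.single m 1),
    Xfr_snd_symm hρ p (Pi.single i 1) (Pi.single m I),
    Xfr_snd_symm hρ p (Pi.single i I) (Pi.single m I)]
  ring

lemma Xfr_contDiff_wirtZ (hρ : ContDiff ℝ (⊤:ℕ∞) ρ) (m : Fin n) :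
    ContDiff ℝ (⊤:ℕ∞) (fun z => wirtZ (fun q => (ρ q : ℂ)) z m) := by
  have hfC : ContDiff ℝ (⊤:ℕ∞) (fun q => ((ρ q : ℝ) : ℂ)) := Xfr_contDiff_ofReal hρ
  simp only [wirtZ]
  exact contDiff_const.mul ((Xfr_contDiff_fderiv_apply hfC _).sub
    (contDiff_const.mul (Xfr_contDiff_fderiv_apply hfC _)))

lemma Xfr_contDiff_sigma (hρ : ContDiff ℝ (⊤:ℕ∞) ρ) :
    ContDiff ℝ (⊤:ℕ∞) (fun z : Fin n → ℂ => ∑ kk, z kk * wirtZ (fun q => (ρ q : ℂ)) z kk) :=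
  ContDiff.sum fun kk _ =>
    ((ContinuousLinearMap.proj (R := ℝ) (φ := fun _ : Fin n => ℂ) kk).contDiff).mul
      (Xfr_contDiff_wirtZ hρ kk)

lemma Xfr_wc_formula (hρ : ContDiff ℝ (⊤:ℕ∞) ρ) {p : Fin n → ℂ}
    (hσ : (∑ k, p k * wirtZ (fun q => (ρ q : ℂ)) p k) ≠ 0) (i m : Fin n) :
    wirtZbar (fun z => wC ρ z m) p i
      = wirtZbar (fun z => wirtZ (fun q => (ρ q : ℂ)) z m) p i
          * (∑ k, p k * wirtZ (fun q => (ρ q : ℂ)) p k)⁻¹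
        + wirtZ (fun q => (ρ q : ℂ)) p m
          * (-(((∑ k, p k * wirtZ (fun q => (ρ q : ℂ)) p k)^2)⁻¹)
            * ∑ k, p k * wirtZbar (fun z => wirtZ (fun q => (ρ q : ℂ)) z k) p i) := by
  have hgd : ∀ m' : Fin n, DifferentiableAt ℝ (fun z => wirtZ (fun q => (ρ q : ℂ)) z m') p :=
    fun m' => ((Xfr_contDiff_wirtZ hρ m').differentiable Xfr_one_le) p
  have hσd : DifferentiableAt ℝ
      (fun z : Fin n → ℂ => ∑ kk, z kk * wirtZ (fun q => (ρ q : ℂ)) z kk) p :=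
    ((Xfr_contDiff_sigma hρ).differentiable Xfr_one_le) p
  have hcoordd : ∀ kk : Fin n, DifferentiableAt ℝ (fun z : Fin n → ℂ => z kk) p :=
    fun kk => (ContinuousLinearMap.proj (R := ℝ) (φ := fun _ : Fin n => ℂ) kk).differentiableAt
  have h1 : (fun z => wC ρ z m) = fun z => (wirtZ (fun q => (ρ q : ℂ)) z m)
      * ((fun z' : Fin n → ℂ => ∑ kk, z' kk * wirtZ (fun q => (ρ q : ℂ)) z' kk) z)⁻¹ := by
    funext z; rw [wC, div_eq_mul_inv]
  rw [h1, Xfr_wb_mul (hgd m) (hσd.fun_inv hσ) i, Xfr_wb_inv hσd hσ i]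
  have hσbar : wirtZbar (fun z : Fin n → ℂ => ∑ kk, z kk * wirtZ (fun q => (ρ q : ℂ)) z kk) p i
      = ∑ kk, p kk * wirtZbar (fun z => wirtZ (fun q => (ρ q : ℂ)) z kk) p i := by
    rw [Xfr_wb_sum Finset.univ (fun kk _ => (hcoordd kk).fun_mul (hgd kk)) i]
    exact Finset.sum_congr rfl fun kk _ => by
      rw [Xfr_wb_mul (hcoordd kk) (hgd kk) i, Xfr_wb_coord]; ring
  rw [hσbar]

end XfrReal

lemma Xfr_linalg {n : ℕ} (p a : Fin n → ℂ) (H : Fin n → Fin n → ℂ) (σ : ℂ)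
    (hσdef : σ = ∑ kk, p kk * a kk) (hσ0 : σ ≠ 0)
    (hherm : ∀ i m, (starRingEnd ℂ) (H i m) = H m i)
    (β : Fin n → Fin n → Fin n → ℂ)
    (htan : ∀ x y, x ≠ y → (∑ m, β x y m * (starRingEnd ℂ) (a m)) = 0)
    (hkey : ∀ x y, x ≠ y → ∀ m, σ * (∑ i, β x y i * H i m)
        - a m * (∑ i, β x y i * (∑ kk, p kk * H i kk))
        = σ^2 * ((if m = x then p y else 0) + (if m = y then -(p x) else 0)))
    (j k ℓ : Fin n) (hjk : j ≠ k) (hjℓ : j ≠ ℓ) (hkℓ : k ≠ ℓ) :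
    ∀ m, p j * β k ℓ m + p k * β ℓ j m + p ℓ * β j k m = 0 := by
  classical
  have hσc : (starRingEnd ℂ) σ ≠ 0 := fun hh => hσ0 (by simpa using congrArg (starRingEnd ℂ) hh)
  set c : Fin n → ℂ := fun m => p j * β k ℓ m + p k * β ℓ j m + p ℓ * β j k m with hcdef
  have hswap : ∀ (γ : Fin n → ℂ), (∑ i, γ i * ∑ kk, p kk * H i kk)
      = ∑ kk, p kk * ∑ i, γ i * H i kk := by
    intro γ
    calc (∑ i, γ i * ∑ kk, p kk * H i kk) = ∑ i, ∑ kk, γ i * (p kk * H i kk) :=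
          Finset.sum_congr rfl fun i _ => Finset.mul_sum _ _ _
      _ = ∑ kk, ∑ i, γ i * (p kk * H i kk) := Finset.sum_comm
      _ = ∑ kk, p kk * ∑ i, γ i * H i kk := Finset.sum_congr rfl fun kk _ => by
          rw [Finset.mul_sum]; exact Finset.sum_congr rfl fun i _ => by ring
  have hkey' : ∀ x y, x ≠ y → ∀ m, σ * (∑ i, β x y i * H i m)
      - a m * (∑ kk, p kk * ∑ i, β x y i * H i kk)
      = σ^2 * ((if m = x then p y else 0) + (if m = y then -(p x) else 0)) := by
    intro x y hxy m
    rw [← hswap (β x y)]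
    exact hkey x y hxy m
  have hCH : ∀ m, (∑ i, c i * H i m)
      = p j * (∑ i, β k ℓ i * H i m) + p k * (∑ i, β ℓ j i * H i m)
        + p ℓ * (∑ i, β j k i * H i m) := by
    intro m
    rw [Finset.mul_sum, Finset.mul_sum, Finset.mul_sum, ← Finset.sum_add_distrib,
      ← Finset.sum_add_distrib]
    exact Finset.sum_congr rfl fun i _ => by simp only [hcdef]; ring
  have hkey_c : ∀ m, σ * (∑ i, c i * H i m)
      - a m * (∑ kk, p kk * ∑ i, c i * H i kk) = 0 := by
    intro m
    have e1 := hkey' k ℓ hkℓ m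
    have e2 := hkey' ℓ j (Ne.symm hjℓ) m
    have e3 := hkey' j k hjk m
    have hsum2 : (∑ kk, p kk * ∑ i, c i * H i kk)
        = p j * (∑ kk, p kk * ∑ i, β k ℓ i * H i kk)
          + p k * (∑ kk, p kk * ∑ i, β ℓ j i * H i kk)
          + p ℓ * (∑ kk, p kk * ∑ i, β j k i * H i kk) := by
      rw [Finset.mul_sum, Finset.mul_sum, Finset.mul_sum, ← Finset.sum_add_distrib,
        ← Finset.sum_add_distrib]
      exact Finset.sum_congr rfl fun kk _ => by rw [hCH kk]; ring
    have hV : p j * (σ^2 * ((if m = k then p ℓ else 0) + (if m = ℓ then -(p k) else 0)))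
        + p k * (σ^2 * ((if m = ℓ then p j else 0) + (if m = j then -(p ℓ) else 0)))
        + p ℓ * (σ^2 * ((if m = j then p k else 0) + (if m = k then -(p j) else 0))) = 0 := by
      by_cases h1 : m = j
      · subst h1
        simp [hjk, hjℓ]
        try ring
      · by_cases h2 : m = k
        · subst h2
          simp [h1, hkℓ]
          try ring
        · by_cases h3 : m = ℓ
          · subst h3
            simp [h1, h2]
            try ring
          · simp [h1, h2, h3]
            try ring
    rw [hCH m, hsum2]
    linear_combination p j * e1 + p k * e2 + p ℓ * e3 + hV
  have htc : (∑ m, c m * (starRingEnd ℂ) (a m)) = 0 := by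
    have t1 := htan k ℓ hkℓ
    have t2 := htan ℓ j (Ne.symm hjℓ)
    have t3 := htan j k hjk
    calc (∑ m, c m * (starRingEnd ℂ) (a m))
        = p j * (∑ m, β k ℓ m * (starRingEnd ℂ) (a m))
          + p k * (∑ m, β ℓ j m * (starRingEnd ℂ) (a m))
          + p ℓ * (∑ m, β j k m * (starRingEnd ℂ) (a m)) := by
          rw [Finset.mul_sum, Finset.mul_sum, Finset.mul_sum, ← Finset.sum_add_distrib,
            ← Finset.sum_add_distrib]
          exact Finset.sum_congr rfl fun m _ => by simp only [hcdef]; ring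
      _ = 0 := by rw [t1, t2, t3]; ring
  have hpair : ∀ x y, x ≠ y → c x * (starRingEnd ℂ) (p y) - c y * (starRingEnd ℂ) (p x) = 0 := by
    intro x y hxy
    have swap2 : (∑ m, c m * (starRingEnd ℂ) (∑ i, β x y i * H i m))
        = ∑ i, (starRingEnd ℂ) (β x y i) * (∑ m, c m * H m i) := by
      calc (∑ m, c m * (starRingEnd ℂ) (∑ i, β x y i * H i m))
          = ∑ m, ∑ i, (starRingEnd ℂ) (β x y i) * (c m * H m i) := by
            refine Finset.sum_congr rfl fun m _ => ?_
            rw [map_sum, Finset.mul_sum]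
            exact Finset.sum_congr rfl fun i _ => by rw [map_mul, hherm i m]; ring
        _ = ∑ i, ∑ m, (starRingEnd ℂ) (β x y i) * (c m * H m i) := Finset.sum_comm
        _ = ∑ i, (starRingEnd ℂ) (β x y i) * (∑ m, c m * H m i) :=
            Finset.sum_congr rfl fun i _ => by rw [Finset.mul_sum]
    have hconj : (∑ i, (starRingEnd ℂ) (β x y i) * a i)
        = (starRingEnd ℂ) (∑ m, β x y m * (starRingEnd ℂ) (a m)) := by
      rw [map_sum]
      exact Finset.sum_congr rfl fun i _ => by rw [map_mul]; simp
    have hE1 : σ * (∑ m, c m * (starRingEnd ℂ) (∑ i, β x y i * H i m)) = 0 := by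
      rw [swap2, Finset.mul_sum]
      have hstep1 : ∀ i : Fin n, σ * ((starRingEnd ℂ) (β x y i) * (∑ m, c m * H m i))
          = ((starRingEnd ℂ) (β x y i) * a i) * (∑ kk, p kk * ∑ i', c i' * H i' kk) := by
        intro i
        have h5 := hkey_c i
        linear_combination (starRingEnd ℂ) (β x y i) * h5
      rw [Finset.sum_congr rfl fun i _ => hstep1 i, ← Finset.sum_mul, hconj, htan x y hxy,
        map_zero, zero_mul]
    have hE0 : (∑ m, c m * (starRingEnd ℂ) (∑ i, β x y i * H i m)) = 0 :=
      (mul_eq_zero.mp hE1).resolve_left hσ0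
    have hVsum : (∑ m, c m * (starRingEnd ℂ)
          ((if m = x then p y else 0) + (if m = y then -(p x) else 0)))
        = c x * (starRingEnd ℂ) (p y) - c y * (starRingEnd ℂ) (p x) := by
      simp only [map_add, apply_ite (starRingEnd ℂ), map_zero, map_neg, mul_add, mul_ite,
        mul_zero, mul_neg]
      rw [Finset.sum_add_distrib]
      simp [Finset.sum_ite_eq', sub_eq_add_neg]
    have hE2 : (starRingEnd ℂ) σ * (∑ m, c m * (starRingEnd ℂ) (∑ i, β x y i * H i m))
        = (starRingEnd ℂ) (σ^2)
          * (c x * (starRingEnd ℂ) (p y) - c y * (starRingEnd ℂ) (p x)) := by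
      have hstep : ∀ m : Fin n, (starRingEnd ℂ) σ * (c m * (starRingEnd ℂ) (∑ i, β x y i * H i m))
          = c m * (starRingEnd ℂ) (a m)
              * (starRingEnd ℂ) (∑ i, β x y i * (∑ kk, p kk * H i kk))
            + (starRingEnd ℂ) (σ^2) * (c m * (starRingEnd ℂ)
              ((if m = x then p y else 0) + (if m = y then -(p x) else 0))) := by
        intro m
        have e2 := congrArg (starRingEnd ℂ) (hkey x y hxy m)
        simp only [map_sub, map_mul] at e2
        linear_combination c m * e2
      calc (starRingEnd ℂ) σ * (∑ m, c m * (starRingEnd ℂ) (∑ i, β x y i * H i m))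
          = ∑ m, (starRingEnd ℂ) σ * (c m * (starRingEnd ℂ) (∑ i, β x y i * H i m)) :=
            Finset.mul_sum _ _ _
        _ = ∑ m, (c m * (starRingEnd ℂ) (a m)
              * (starRingEnd ℂ) (∑ i, β x y i * (∑ kk, p kk * H i kk))
            + (starRingEnd ℂ) (σ^2) * (c m * (starRingEnd ℂ)
              ((if m = x then p y else 0) + (if m = y then -(p x) else 0)))) :=
            Finset.sum_congr rfl fun m _ => hstep m
        _ = (∑ m, c m * (starRingEnd ℂ) (a m))
              * (starRingEnd ℂ) (∑ i, β x y i * (∑ kk, p kk * H i kk))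
            + (starRingEnd ℂ) (σ^2) * (∑ m, c m * (starRingEnd ℂ)
              ((if m = x then p y else 0) + (if m = y then -(p x) else 0))) := by
            rw [Finset.sum_add_distrib, ← Finset.sum_mul, ← Finset.mul_sum]
        _ = (starRingEnd ℂ) (σ^2)
              * (c x * (starRingEnd ℂ) (p y) - c y * (starRingEnd ℂ) (p x)) := by
            rw [htc, zero_mul, hVsum, zero_add]
    have hfin : (starRingEnd ℂ) (σ^2)
        * (c x * (starRingEnd ℂ) (p y) - c y * (starRingEnd ℂ) (p x)) = 0 := by
      rw [← hE2, hE0, mul_zero]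
    have hσ2c : (starRingEnd ℂ) (σ^2) ≠ 0 := by
      rw [map_pow]; exact pow_ne_zero 2 hσc
    exact (mul_eq_zero.mp hfin).resolve_left hσ2c
  obtain ⟨k0, hk0⟩ : ∃ k0, p k0 ≠ 0 := by
    by_contra h
    push_neg at h
    exact hσ0 (by rw [hσdef]; exact Finset.sum_eq_zero fun kk _ => by rw [h kk, zero_mul])
  have hpk0c : (starRingEnd ℂ) (p k0) ≠ 0 :=
    fun hh => hk0 (by simpa using congrArg (starRingEnd ℂ) hh)
  have hck0 : c k0 = 0 := by
    have hcalc : c k0 * (starRingEnd ℂ) σ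
        = (starRingEnd ℂ) (p k0) * (∑ m, c m * (starRingEnd ℂ) (a m)) := by
      rw [hσdef, map_sum, Finset.mul_sum, Finset.mul_sum]
      refine Finset.sum_congr rfl fun m _ => ?_
      rw [map_mul]
      rcases eq_or_ne m k0 with h | h
      · subst h; ring
      · have h2 := hpair m k0 h
        linear_combination (-(starRingEnd ℂ) (a m)) * h2
    rw [htc, mul_zero] at hcalc
    exact (mul_eq_zero.mp hcalc).resolve_right hσc
  intro m
  have h3 : c m * (starRingEnd ℂ) (p k0) = 0 := by
    rcases eq_or_ne m k0 with h | h
    · subst h; rw [hck0, zero_mul]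
    · have h4 := hpair m k0 h
      rw [hck0] at h4
      linear_combination h4
  have h5 : c m = 0 := (mul_eq_zero.mp h3).resolve_right hpk0c
  simpa only [hcdef] using h5

theorem X_field_relation
    {n : ℕ} (hn : 3 ≤ n)
    (ρ : (Fin n → ℂ) → ℝ) (hρ : ContDiff ℝ (⊤ : ℕ∞) ρ)
    (S : Set (Fin n → ℂ)) (hSdef : S = ρ ⁻¹' {0}) (hSne : S.Nonempty)
    (hDρ : ∀ p ∈ S, fderiv ℝ ρ p ≠ 0)
    (hsum : ∀ p ∈ S, (∑ k, p k * wirtZ (fun q => (ρ q : ℂ)) p k) ≠ 0)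
    (b : Fin n → Fin n → (Fin n → ℂ) → Fin n → ℂ)
    (hb : ∀ j k, j ≠ k → ContDiff ℝ (⊤ : ℕ∞) (b j k))
    (hbtan : ∀ j k, j ≠ k → ∀ p ∈ S, (∑ m, b j k p m * wirtZbar (fun q => (ρ q : ℂ)) p m) = 0)
    (hXwj : ∀ j k, j ≠ k → ∀ p ∈ S, XopN b j k (fun z => wC ρ z j) p = p k)
    (hXwk : ∀ j k, j ≠ k → ∀ p ∈ S, XopN b j k (fun z => wC ρ z k) p = -(p j))
    (hXwm : ∀ j k, j ≠ k → ∀ m, m ≠ j → m ≠ k → ∀ p ∈ S, XopN b j k (fun z => wC ρ z m) p = 0) :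
    ∀ j k ℓ : Fin n, j ≠ k → j ≠ ℓ → k ≠ ℓ →
      ∀ F : (Fin n → ℂ) → ℂ, ContDiff ℝ (⊤ : ℕ∞) F →
      ∀ p ∈ S,
        p j * XopN b k ℓ F p + p k * XopN b ℓ j F p + p ℓ * XopN b j k F p = 0 := by
  intro j k ℓ hjk hjℓ hkℓ F hF p hp
  classical
  have hσ0 : (∑ kk, p kk * wirtZ (fun q => (ρ q : ℂ)) p kk) ≠ 0 := hsum p hp
  -- tangency in conjugate form
  have htan : ∀ x y : Fin n, x ≠ y →
      (∑ m, b x y p m * (starRingEnd ℂ) (wirtZ (fun q => (ρ q : ℂ)) p m)) = 0 := by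
    intro x y hxy
    have h0 := hbtan x y hxy p hp
    rw [Finset.sum_congr rfl fun m _ => by rw [Xfr_wbar_conj hρ p m]] at h0
    exact h0
  -- the key identity
  have hkey : ∀ x y : Fin n, x ≠ y → ∀ m : Fin n,
      (∑ kk, p kk * wirtZ (fun q => (ρ q : ℂ)) p kk)
          * (∑ i, b x y p i * wirtZbar (fun z => wirtZ (fun q => (ρ q : ℂ)) z m) p i)
        - wirtZ (fun q => (ρ q : ℂ)) p m
          * (∑ i, b x y p i * (∑ kk, p kk * wirtZbar (fun z => wirtZ (fun q => (ρ q : ℂ)) z kk) p i))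
        = (∑ kk, p kk * wirtZ (fun q => (ρ q : ℂ)) p kk)^2
          * ((if m = x then p y else 0) + (if m = y then -(p x) else 0)) := by
    intro x y hxy m
    have hval : XopN b x y (fun z => wC ρ z m) p
        = (if m = x then p y else 0) + (if m = y then -(p x) else 0) := by
      by_cases h1 : m = x
      · rw [h1, hXwj x y hxy p hp]
        simp [hxy]
      · by_cases h2 : m = y
        · rw [h2, hXwk x y hxy p hp]
          simp [Ne.symm hxy]
        · rw [hXwm x y hxy m h1 h2 p hp]
          simp [h1, h2]
    have hXcalc : XopN b x y (fun z => wC ρ z m) p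
        = (∑ kk, p kk * wirtZ (fun q => (ρ q : ℂ)) p kk)⁻¹
            * (∑ i, b x y p i * wirtZbar (fun z => wirtZ (fun q => (ρ q : ℂ)) z m) p i)
          + (-(wirtZ (fun q => (ρ q : ℂ)) p m
              * (((∑ kk, p kk * wirtZ (fun q => (ρ q : ℂ)) p kk)^2)⁻¹)))
            * (∑ i, b x y p i
              * (∑ kk, p kk * wirtZbar (fun z => wirtZ (fun q => (ρ q : ℂ)) z kk) p i)) := by
      show (∑ i, b x y p i * wirtZbar (fun z => wC ρ z m) p i) = _
      calc (∑ i, b x y p i * wirtZbar (fun z => wC ρ z m) p i)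
          = ∑ i, ((∑ kk, p kk * wirtZ (fun q => (ρ q : ℂ)) p kk)⁻¹
              * (b x y p i * wirtZbar (fun z => wirtZ (fun q => (ρ q : ℂ)) z m) p i)
            + (-(wirtZ (fun q => (ρ q : ℂ)) p m
                * (((∑ kk, p kk * wirtZ (fun q => (ρ q : ℂ)) p kk)^2)⁻¹)))
              * (b x y p i
                * (∑ kk, p kk * wirtZbar (fun z => wirtZ (fun q => (ρ q : ℂ)) z kk) p i))) :=
            Finset.sum_congr rfl fun i _ => by
              rw [Xfr_wc_formula hρ hσ0 i m]; ring
        _ = _ := by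
            rw [Finset.sum_add_distrib, ← Finset.mul_sum, ← Finset.mul_sum]
    have h6 : (∑ kk, p kk * wirtZ (fun q => (ρ q : ℂ)) p kk)⁻¹
          * (∑ i, b x y p i * wirtZbar (fun z => wirtZ (fun q => (ρ q : ℂ)) z m) p i)
        + (-(wirtZ (fun q => (ρ q : ℂ)) p m
            * (((∑ kk, p kk * wirtZ (fun q => (ρ q : ℂ)) p kk)^2)⁻¹)))
          * (∑ i, b x y p i
            * (∑ kk, p kk * wirtZbar (fun z => wirtZ (fun q => (ρ q : ℂ)) z kk) p i))
        = (if m = x then p y else 0) + (if m = y then -(p x) else 0) := by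
      rw [← hXcalc, hval]
    calc (∑ kk, p kk * wirtZ (fun q => (ρ q : ℂ)) p kk)
          * (∑ i, b x y p i * wirtZbar (fun z => wirtZ (fun q => (ρ q : ℂ)) z m) p i)
        - wirtZ (fun q => (ρ q : ℂ)) p m
          * (∑ i, b x y p i * (∑ kk, p kk * wirtZbar (fun z => wirtZ (fun q => (ρ q : ℂ)) z kk) p i))
        = (∑ kk, p kk * wirtZ (fun q => (ρ q : ℂ)) p kk)^2
          * ((∑ kk, p kk * wirtZ (fun q => (ρ q : ℂ)) p kk)⁻¹
            * (∑ i, b x y p i * wirtZbar (fun z => wirtZ (fun q => (ρ q : ℂ)) z m) p i)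
          + (-(wirtZ (fun q => (ρ q : ℂ)) p m
              * (((∑ kk, p kk * wirtZ (fun q => (ρ q : ℂ)) p kk)^2)⁻¹)))
            * (∑ i, b x y p i
              * (∑ kk, p kk * wirtZbar (fun z => wirtZ (fun q => (ρ q : ℂ)) z kk) p i))) := by
          field_simp
          ring
      _ = _ := by rw [h6]
  -- apply the linear algebra lemma
  have hc0 := Xfr_linalg p (fun m => wirtZ (fun q => (ρ q : ℂ)) p m)
    (fun i m => wirtZbar (fun z => wirtZ (fun q => (ρ q : ℂ)) z m) p i)
    (∑ kk, p kk * wirtZ (fun q => (ρ q : ℂ)) p kk) rfl hσ0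
    (fun i m => Xfr_herm hρ p i m)
    (fun x y => b x y p) htan hkey j k ℓ hjk hjℓ hkℓ
  -- conclude
  simp only [XopN]
  rw [Finset.mul_sum, Finset.mul_sum, Finset.mul_sum, ← Finset.sum_add_distrib,
    ← Finset.sum_add_distrib]
  refine Finset.sum_eq_zero fun m _ => ?_
  have hzero := hc0 m
  calc p j * (b k ℓ p m * wirtZbar F p m) + p k * (b ℓ j p m * wirtZbar F p m)
        + p ℓ * (b j k p m * wirtZbar F p m)
      = (p j * b k ℓ p m + p k * b ℓ j p m + p ℓ * b j k p m) * wirtZbar F p m := by ring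
    _ = 0 := by rw [hzero, zero_mul]
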